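/- Let f : ℝ^d → ℝ be differentiable with L-Lipschitz gradient on a convex set Q, and let f_δ(x) = f(x) + δ(x) where |δ(x)| ≤ Δ for all x ∈ Q. For τ > 0 define the full coordinate finite-difference estimator g(x) = Σ_{i=1}^d ((f_δ(x+τe_i) - f_δ(x-τe_i))/(2τ)) e_i. Then for any x with x ± τe_i ∈ Q for all i, ‖g(x) - ∇f(x)‖² ≤ d L² τ² + 2dΔ²/τ². -/

import Mathlib

open scoped RealInnerProductSpace

lemma descent {d : ℕ} (f : EuclideanSpace ℝ (Fin d) → ℝ)
    (hdiff : Differentiable ℝ f) (Q : Set (EuclideanSpace ℝ (Fin d)))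
    (L : ℝ) (hL : 0 ≤ L)
    (hLip : ∀ a ∈ Q, ∀ b ∈ Q, ‖gradient f a - gradient f b‖ ≤ L * ‖a - b‖)
    (x v : EuclideanSpace ℝ (Fin d))
    (hseg : ∀ t ∈ Set.Icc (0:ℝ) 1, x + t • v ∈ Q) :
    |f (x + v) - f x - ⟪gradient f x, v⟫| ≤ L / 2 * ‖v‖ ^ 2 := by
  set g' : ℝ → ℝ := fun t => ⟪gradient f (x + t • v), v⟫ with hg'
  have key : ∀ t : ℝ, HasDerivAt (fun t => f (x + t • v)) (g' t) t := by
    intro t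
    have hc : HasDerivAt (fun t : ℝ => x + t • v) v t := by
      simpa using ((hasDerivAt_id t).smul_const v).const_add x
    have hf : HasFDerivAt f (InnerProductSpace.toDual ℝ _ (gradient f (x + t • v)))
        (x + t • v) := (hdiff _).hasGradientAt.hasFDerivAt
    have := hf.comp_hasDerivAt t hc
    exact this
  have hlipt : LipschitzOnWith (L * ‖v‖).toNNReal
      (fun t : ℝ => gradient f (x + t • v)) (Set.Icc 0 1) := by
    rw [lipschitzOnWith_iff_dist_le_mul]
    intro s hs t ht
    rw [dist_eq_norm, dist_eq_norm]
    calc ‖gradient f (x + s • v) - gradient f (x + t • v)‖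
        ≤ L * ‖(x + s • v) - (x + t • v)‖ := hLip _ (hseg s hs) _ (hseg t ht)
      _ = (L * ‖v‖).toNNReal * ‖s - t‖ := by
          rw [Real.coe_toNNReal _ (by positivity)]
          rw [show (x + s • v) - (x + t • v) = (s - t) • v by module]
          rw [norm_smul]; simp [Real.norm_eq_abs]; ring
  have hcont : ContinuousOn g' (Set.Icc (0:ℝ) 1) :=
    ContinuousOn.inner hlipt.continuousOn continuousOn_const
  have hint : IntervalIntegrable g' MeasureTheory.volume 0 1 :=
    (hcont.mono (by rw [Set.uIcc_of_le zero_le_one])).intervalIntegrable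
  have hftc : ∫ t in (0:ℝ)..1, g' t = f (x + v) - f x := by
    have := intervalIntegral.integral_eq_sub_of_hasDerivAt (f := fun t => f (x + t • v))
      (fun t _ => key t) hint
    simpa using this
  have hrepr : f (x + v) - f x - ⟪gradient f x, v⟫
      = ∫ t in (0:ℝ)..1, (g' t - ⟪gradient f x, v⟫) := by
    rw [intervalIntegral.integral_sub hint intervalIntegrable_const, hftc]
    simp
  rw [hrepr]
  have hbound : ∀ t ∈ Set.uIoc (0:ℝ) 1, ‖g' t - ⟪gradient f x, v⟫‖ ≤ L * ‖v‖ ^ 2 * t := by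
    intro t ht
    rw [Set.uIoc_of_le zero_le_one] at ht
    have h1 : g' t - ⟪gradient f x, v⟫ = ⟪gradient f (x + t • v) - gradient f x, v⟫ := by
      simp [g', inner_sub_left]
    rw [h1, Real.norm_eq_abs]
    calc |⟪gradient f (x + t • v) - gradient f x, v⟫|
        ≤ ‖gradient f (x + t • v) - gradient f x‖ * ‖v‖ := abs_real_inner_le_norm _ _
      _ ≤ (L * ‖x + t • v - x‖) * ‖v‖ := by
          gcongr
          exact hLip _ (hseg t ⟨le_of_lt ht.1, ht.2⟩) _ (by simpa using hseg 0 ⟨le_refl _, zero_le_one⟩)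
      _ = L * ‖v‖ ^ 2 * t := by
          rw [show x + t • v - x = t • v by abel, norm_smul, Real.norm_eq_abs,
            abs_of_pos ht.1]; ring
  have hgi : ∫ t in (0:ℝ)..1, L * ‖v‖ ^ 2 * t = L / 2 * ‖v‖ ^ 2 := by
    rw [intervalIntegral.integral_const_mul, integral_id]; ring
  have := intervalIntegral.norm_integral_le_abs_of_norm_le
    (f := fun t => g' t - ⟪gradient f x, v⟫) (g := fun t => L * ‖v‖ ^ 2 * t)
    (μ := MeasureTheory.volume) (a := 0) (b := 1)
    (MeasureTheory.ae_restrict_of_forall_mem measurableSet_uIoc hbound)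
    (by apply Continuous.intervalIntegrable; continuity)
  rw [hgi, abs_of_nonneg (mul_nonneg (by linarith) (sq_nonneg _)), Real.norm_eq_abs] at this
  exact this

theorem full_approx_error (d : ℕ) (hd : 0 < d)
    (f δ : EuclideanSpace ℝ (Fin d) → ℝ)
    (Q : Set (EuclideanSpace ℝ (Fin d))) (hQconv : Convex ℝ Q)
    (L Δ τ : ℝ) (hL : 0 < L) (hΔ : 0 ≤ Δ) (hτ : 0 < τ)
    (hdiff : Differentiable ℝ f)
    (hLip : ∀ x ∈ Q, ∀ y ∈ Q, ‖gradient f x - gradient f y‖ ≤ L * ‖x - y‖)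
    (hδ : ∀ x ∈ Q, |δ x| ≤ Δ)
    (x : EuclideanSpace ℝ (Fin d)) (hx : x ∈ Q)
    (hxi : ∀ i : Fin d, x + τ • EuclideanSpace.single i (1 : ℝ) ∈ Q ∧
      x - τ • EuclideanSpace.single i (1 : ℝ) ∈ Q) :
    ‖(∑ i : Fin d,
        (((f (x + τ • EuclideanSpace.single i (1 : ℝ)) + δ (x + τ • EuclideanSpace.single i (1 : ℝ)))
          - (f (x - τ • EuclideanSpace.single i (1 : ℝ)) + δ (x - τ • EuclideanSpace.single i (1 : ℝ))))
          / (2 * τ)) • EuclideanSpace.single i (1 : ℝ)) - gradient f x‖ ^ 2 ≤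
      (d : ℝ) * L ^ 2 * τ ^ 2 + 2 * (d : ℝ) * Δ ^ 2 / τ ^ 2 := by
  set e : Fin d → EuclideanSpace ℝ (Fin d) := fun i => EuclideanSpace.single i (1 : ℝ) with he
  set G := gradient f x with hG
  set c : Fin d → ℝ := fun i =>
    ((f (x + τ • e i) + δ (x + τ • e i)) - (f (x - τ • e i) + δ (x - τ • e i))) / (2 * τ) with hc
  have hne : ∀ i, ‖e i‖ = 1 := by intro i; simp [he]
  have hcomp : ∀ i, |c i - G i| ≤ L * τ / 2 + Δ / τ := by
    intro i
    obtain ⟨hp, hm⟩ := hxi i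
    have hnv : ‖τ • e i‖ = τ := by rw [norm_smul, hne, Real.norm_eq_abs, abs_of_pos hτ]; ring
    have hA := descent f hdiff Q L hL.le hLip x (τ • e i) (by
      intro t ht
      have := hQconv hx hp (by linarith [ht.2] : (0:ℝ) ≤ 1 - t) ht.1 (by ring)
      convert this using 1; module)
    have hB := descent f hdiff Q L hL.le hLip x (-(τ • e i)) (by
      intro t ht
      have := hQconv hx hm (by linarith [ht.2] : (0:ℝ) ≤ 1 - t) ht.1 (by ring)
      convert this using 1
      rw [sub_eq_add_neg]; module)
    rw [hnv] at hA
    rw [norm_neg, hnv] at hB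
    have hxm : x + -(τ • e i) = x - τ • e i := by rw [sub_eq_add_neg]
    rw [hxm] at hB
    have hip : ⟪G, τ • e i⟫ = τ * G i := by
      rw [real_inner_smul_right]
      congr 1
      simpa [he] using EuclideanSpace.inner_single_right (𝕜 := ℝ) i 1 G
    have hin : ⟪G, -(τ • e i)⟫ = -(τ * G i) := by rw [inner_neg_right, hip]
    rw [hip] at hA; rw [hin] at hB
    have hδp := hδ _ hp
    have hδm := hδ _ hm
    set A := f (x + τ • e i) - f x - τ * G i with hA'
    set B := f (x - τ • e i) - f x - -(τ * G i) with hB'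
    have hkey : c i - G i = (A - B + δ (x + τ • e i) - δ (x - τ • e i)) / (2 * τ) := by
      rw [hc, hA', hB']
      field_simp
      ring
    rw [hkey, abs_div, abs_of_pos (by positivity : (0:ℝ) < 2 * τ)]
    have h4 : |A - B + δ (x + τ • e i) - δ (x - τ • e i)|
        ≤ |A| + |B| + |δ (x + τ • e i)| + |δ (x - τ • e i)| := by
      calc |A - B + δ (x + τ • e i) - δ (x - τ • e i)|
          ≤ |A - B + δ (x + τ • e i)| + |δ (x - τ • e i)| := abs_sub _ _
        _ ≤ |A - B| + |δ (x + τ • e i)| + |δ (x - τ • e i)| := by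
            have := abs_add_le (A - B) (δ (x + τ • e i)); linarith
        _ ≤ |A| + |B| + |δ (x + τ • e i)| + |δ (x - τ • e i)| := by
            have := abs_sub A B; linarith
    calc |A - B + δ (x + τ • e i) - δ (x - τ • e i)| / (2 * τ)
        ≤ (L / 2 * τ ^ 2 + L / 2 * τ ^ 2 + Δ + Δ) / (2 * τ) := by
          apply div_le_div_of_nonneg_right ?_ (by positivity) |>.trans_eq rfl
          linarith [h4, hA, hB, hδp, hδm]
      _ = L * τ / 2 + Δ / τ := by field_simp; ring
  have happ : ∀ j, ((∑ i, c i • e i) - G) j = c j - G j := by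
    intro j
    have : (∑ i, c i • e i) j = ∑ i, (c i • e i) j := by
      rw [WithLp.ofLp_sum, Finset.sum_apply]
    simp [PiLp.sub_apply, this, PiLp.smul_apply, he, EuclideanSpace.single_apply, Pi.single_apply]
  have hnorm : ‖(∑ i, c i • e i) - G‖ ^ 2 = ∑ j, (c j - G j) ^ 2 := by
    rw [EuclideanSpace.norm_eq, Real.sq_sqrt (Finset.sum_nonneg fun j _ => by positivity)]
    exact Finset.sum_congr rfl fun j _ => by rw [happ, Real.norm_eq_abs, sq_abs]
  calc ‖(∑ i, c i • e i) - G‖ ^ 2 = ∑ j, (c j - G j) ^ 2 := hnorm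
    _ ≤ ∑ _j : Fin d, (L ^ 2 * τ ^ 2 + 2 * Δ ^ 2 / τ ^ 2) := by
        apply Finset.sum_le_sum
        intro j _
        have h1 := hcomp j
        have h2 : (c j - G j) ^ 2 ≤ (L * τ / 2 + Δ / τ) ^ 2 := by
          rw [← sq_abs]
          exact pow_le_pow_left₀ (abs_nonneg _) h1 2
        refine h2.trans ?_
        rw [div_add_div _ _ (two_ne_zero) hτ.ne', div_pow,
          div_le_iff₀ (by positivity : (0:ℝ) < (2*τ)^2)]
        have hq : 2 * Δ ^ 2 / τ ^ 2 * τ ^ 2 = 2 * Δ ^ 2 := by field_simp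
        nlinarith [hq, sq_nonneg (L * τ ^ 2 - Δ), sq_nonneg (L * τ ^ 2), sq_nonneg Δ]
    _ = (d : ℝ) * L ^ 2 * τ ^ 2 + 2 * (d : ℝ) * Δ ^ 2 / τ ^ 2 := by
        rw [Finset.sum_const, Finset.card_univ, Fintype.card_fin, nsmul_eq_mul]
        ring
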